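/- arXiv:2407.04914 — 6 statements merged into one kernel-verified Lean document; each statement's English description precedes it below -/
import Mathlib

section
/- Let A be a symmetric positive definite n×n real matrix with smallest eigenvalue μ > 0 and largest eigenvalue L. Then for every nonzero vector g ∈ ℝⁿ, (gᵀg)² / ((gᵀAg)(gᵀA⁻¹g)) ≥ 4μL/(L+μ)² (Kantorovich inequality). -/
open Matrix Finset

/-- Kantorovich inequality for a symmetric positive definite matrix with
eigenvalues in `[μ, L]`, `μ` the smallest and `L` the largest eigenvalue. -/
theorem stmt_0 {n : ℕ} (A : Matrix (Fin n) (Fin n) ℝ) (hA : A.PosDef)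
    (μ L : ℝ) (hμpos : 0 < μ)
    (hμ : ∃ i, hA.1.eigenvalues i = μ)
    (hL : ∃ i, hA.1.eigenvalues i = L)
    (hbd : ∀ i, μ ≤ hA.1.eigenvalues i ∧ hA.1.eigenvalues i ≤ L)
    (g : Fin n → ℝ) (hg : g ≠ 0) :
    4 * μ * L / (L + μ) ^ 2 ≤
      (g ⬝ᵥ g) ^ 2 / ((g ⬝ᵥ A.mulVec g) * (g ⬝ᵥ A⁻¹.mulVec g)) := by
  set lam := hA.1.eigenvalues with hlam
  set U : Matrix (Fin n) (Fin n) ℝ := (hA.1.eigenvectorUnitary : Matrix (Fin n) (Fin n) ℝ) with hU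
  have hUsU : star U * U = 1 := Unitary.coe_star_mul_self hA.1.eigenvectorUnitary
  have hUUs : U * star U = 1 := Unitary.coe_mul_star_self hA.1.eigenvectorUnitary
  have hlampos : ∀ i, 0 < lam i := fun i => hA.eigenvalues_pos i
  have hAeq : A = U * diagonal lam * star U := by
    have := hA.1.spectral_theorem
    simpa using this
  have hAinv : A⁻¹ = U * diagonal (fun i => (lam i)⁻¹) * star U := by
    apply inv_eq_right_inv
    rw [hAeq]
    calc U * diagonal lam * star U * (U * diagonal (fun i => (lam i)⁻¹) * star U)
        = U * (diagonal lam * (star U * U) * diagonal (fun i => (lam i)⁻¹)) * star U := by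
          simp only [Matrix.mul_assoc]
      _ = 1 := by
          rw [hUsU, mul_one, diagonal_mul_diagonal]
          have : (fun i => lam i * (lam i)⁻¹) = fun _ => (1:ℝ) := by
            funext i; exact mul_inv_cancel₀ (hlampos i).ne'
          rw [this, diagonal_one, mul_one, hUUs]
  set c : Fin n → ℝ := star U *ᵥ g with hc
  have hsU : star U = Uᵀ := by
    ext i j
    simp [star_eq_conjTranspose, conjTranspose_apply]
  have key : ∀ M : Matrix (Fin n) (Fin n) ℝ,
      g ⬝ᵥ (U * M * star U) *ᵥ g = c ⬝ᵥ M *ᵥ c := by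
    intro M
    rw [hc, hsU, ← mulVec_mulVec, ← mulVec_mulVec, dotProduct_mulVec, ← mulVec_transpose]
  have hgg : g ⬝ᵥ g = c ⬝ᵥ c := by
    have h1 := key 1
    rw [mul_one, hUUs] at h1
    simpa [one_mulVec] using h1
  have hAg : g ⬝ᵥ A.mulVec g = ∑ i, lam i * c i ^ 2 := by
    rw [hAeq, key, dotProduct, ]
    congr 1; funext i
    rw [mulVec_diagonal]; ring
  have hAig : g ⬝ᵥ A⁻¹.mulVec g = ∑ i, c i ^ 2 / lam i := by
    rw [hAinv, key, dotProduct]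
    congr 1; funext i
    rw [mulVec_diagonal]; field_simp
  have hcne : c ≠ 0 := by
    intro h
    apply hg
    have : U *ᵥ c = g := by
      rw [hc, mulVec_mulVec, hUUs, one_mulVec]
    rw [← this, h, mulVec_zero]
  obtain ⟨i0, hi0⟩ : ∃ i, c i ≠ 0 := by
    by_contra h; push_neg at h; exact hcne (funext h)
  set S := ∑ i, c i ^ 2 with hS
  set P := ∑ i, lam i * c i ^ 2 with hP
  set Q := ∑ i, c i ^ 2 / lam i with hQ
  have hSpos : 0 < S := by
    apply Finset.sum_pos' (fun i _ => sq_nonneg _)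
    exact ⟨i0, Finset.mem_univ _, lt_of_le_of_ne (sq_nonneg _) (Ne.symm (pow_ne_zero 2 hi0))⟩
  have hPpos : 0 < P := by
    apply Finset.sum_pos' (fun i _ => mul_nonneg (hlampos i).le (sq_nonneg _))
    exact ⟨i0, Finset.mem_univ _,
      mul_pos (hlampos i0) (lt_of_le_of_ne (sq_nonneg _) (Ne.symm (pow_ne_zero 2 hi0)))⟩
  have hQpos : 0 < Q := by
    apply Finset.sum_pos' (fun i _ => div_nonneg (sq_nonneg _) (hlampos i).le)
    exact ⟨i0, Finset.mem_univ _,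
      div_pos (lt_of_le_of_ne (sq_nonneg _) (Ne.symm (pow_ne_zero 2 hi0))) (hlampos i0)⟩
  obtain ⟨iL, hiL⟩ := hL
  have hLmu : μ ≤ L := hiL ▸ (hbd iL).1
  have hkey : P + μ * L * Q ≤ (μ + L) * S := by
    rw [hP, hQ, hS, Finset.mul_sum, Finset.mul_sum, ← Finset.sum_add_distrib]
    apply Finset.sum_le_sum
    intro i _
    have h1 := (hbd i).1
    have h2 := (hbd i).2
    have h3 := hlampos i
    have h4 : 0 ≤ (lam i - μ) * (L - lam i) * (c i ^ 2 / lam i) :=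
      mul_nonneg (mul_nonneg (by linarith) (by linarith)) (div_nonneg (sq_nonneg _) h3.le)
    have h5 : lam i * (c i ^2 / lam i) = c i ^ 2 := by field_simp
    nlinarith [sq_nonneg (c i)]
  have hLpos : 0 < L := hμpos.trans_le hLmu
  rw [hgg, hAg, hAig]
  have hcc : c ⬝ᵥ c = S := by rw [hS, dotProduct]; congr 1; funext i; ring
  rw [hcc,
    div_le_div_iff₀ (by positivity) (mul_pos hPpos hQpos)]
  have hnn : 0 ≤ P + μ * L * Q := by
    have := mul_pos (mul_pos hμpos hLpos) hQpos
    nlinarith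
  have hsq := mul_self_le_mul_self hnn hkey
  nlinarith [sq_nonneg (P - μ * L * Q), hsq]
end

section
/- Let A = diag(λ₁,...,λₙ) with 0 < μ = λ₁ ≤ ... ≤ λₙ = L, let f(x) = ½xᵀAx - bᵀx with minimizer x* = A⁻¹b, and let ψ be a function with ψ(λᵢ) > 0 for all i. Given x_k with gradient g_k = Ax_k - b ≠ 0, define the stepsize α_k = γ (g_kᵀψ(A)g_k)/(g_kᵀψ(A)Ag_k) with γ ∈ (0,1], and set x_{k+1} = x_k - α_k g_k. Then ‖x_{k+1} - x*‖²_{ψ(A)A} ≤ (1 - 4γ(2-γ)μL/(L+μ)²) ‖x_k - x*‖²_{ψ(A)A}, where ‖y‖²_D = yᵀDy. -/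
open Matrix

/-- Linear convergence of the family of gradient methods with stepsize
`α_k = γ (g_kᵀψ(A)g_k)/(g_kᵀψ(A)Ag_k)` on a strongly convex quadratic with
diagonal Hessian whose eigenvalues lie in `[μ, L]` with both extremes attained. -/
theorem stmt_1 {n : ℕ} (d : Fin n → ℝ) (μ L γ : ℝ)
    (hμpos : 0 < μ) (hbd : ∀ i, μ ≤ d i ∧ d i ≤ L)
    (hμatt : ∃ i, d i = μ) (hLatt : ∃ i, d i = L)
    (ψ : ℝ → ℝ) (hψ : ∀ i, 0 < ψ (d i))
    (hγ : 0 < γ) (hγ1 : γ ≤ 1)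
    (b xk xs : Fin n → ℝ)
    (A : Matrix (Fin n) (Fin n) ℝ) (hA : A = Matrix.diagonal d)
    (hxs : A.mulVec xs = b)
    (gk : Fin n → ℝ) (hgk : gk = A.mulVec xk - b) (hgk0 : gk ≠ 0)
    (ψA : Matrix (Fin n) (Fin n) ℝ)
    (hψA : ψA = Matrix.diagonal (fun i => ψ (d i)))
    (αk : ℝ) (hαk : αk = γ * (gk ⬝ᵥ ψA.mulVec gk) / (gk ⬝ᵥ (ψA * A).mulVec gk))
    (xk1 : Fin n → ℝ) (hxk1 : xk1 = xk - αk • gk) :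
    (xk1 - xs) ⬝ᵥ (ψA * A).mulVec (xk1 - xs) ≤
      (1 - 4 * γ * (2 - γ) * μ * L / (L + μ) ^ 2) *
        ((xk - xs) ⬝ᵥ (ψA * A).mulVec (xk - xs)) := by
  have key : ∀ (w x y : Fin n → ℝ),
      x ⬝ᵥ (Matrix.diagonal w).mulVec y = ∑ i, x i * (w i * y i) := by
    intro w x y
    simp [dotProduct, Matrix.mulVec_diagonal]
  have hψAA : ψA * A = Matrix.diagonal (fun i => ψ (d i) * d i) := by
    rw [hψA, hA, Matrix.diagonal_mul_diagonal]
  -- error vector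
  set e : Fin n → ℝ := xk - xs with he
  have hgke : ∀ i, gk i = d i * e i := by
    intro i
    have hb : b i = d i * xs i := by
      rw [← hxs, hA]; simp [Matrix.mulVec_diagonal]
    rw [hgk, hA]
    simp [Matrix.mulVec_diagonal, hb, he]
    ring
  -- sums
  set S1 : ℝ := ∑ i, ψ (d i) * d i * e i ^ 2 with hS1def
  set S2 : ℝ := ∑ i, ψ (d i) * d i ^ 2 * e i ^ 2 with hS2def
  set S3 : ℝ := ∑ i, ψ (d i) * d i ^ 3 * e i ^ 2 with hS3def
  have hS1 : e ⬝ᵥ (ψA * A).mulVec e = S1 := by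
    rw [hψAA, key]
    apply Finset.sum_congr rfl
    intro i _; ring
  have hS2 : gk ⬝ᵥ ψA.mulVec gk = S2 := by
    rw [hψA, key]
    apply Finset.sum_congr rfl
    intro i _; rw [hgke i]; ring
  have hS3 : gk ⬝ᵥ (ψA * A).mulVec gk = S3 := by
    rw [hψAA, key]
    apply Finset.sum_congr rfl
    intro i _; rw [hgke i]; ring
  -- positivity facts
  have hdpos : ∀ i, 0 < d i := fun i => lt_of_lt_of_le hμpos (hbd i).1
  have hμL : μ ≤ L := by
    obtain ⟨i, hi⟩ := hLatt
    exact le_trans (hbd i).1 (le_of_eq hi)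
  have hLpos : 0 < L := lt_of_lt_of_le hμpos hμL
  have hLμ : 0 < (L + μ) ^ 2 := by positivity
  have hS1nn : 0 ≤ S1 := by
    apply Finset.sum_nonneg
    intro i _
    have := (hψ i).le; have := (hdpos i).le; positivity
  have hS2nn : 0 ≤ S2 := by
    apply Finset.sum_nonneg
    intro i _
    have := (hψ i).le; have := (hdpos i).le; positivity
  have hS3pos : 0 < S3 := by
    obtain ⟨j, hj⟩ : ∃ j, e j ≠ 0 := by
      by_contra h
      push_neg at h
      apply hgk0
      funext i
      simp [hgke i, h i]
    apply Finset.sum_pos' (fun i _ => by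
      have := (hψ i).le; have := (hdpos i).le; positivity)
    exact ⟨j, Finset.mem_univ j, by
      have := hψ j; have := hdpos j
      have : e j ^ 2 > 0 := by positivity
      positivity⟩
  -- Kantorovich inequality
  have hS3le : S3 ≤ (μ + L) * S2 - μ * L * S1 := by
    have : (μ + L) * S2 - μ * L * S1
        = ∑ i, (ψ (d i) * e i ^ 2) * ((μ + L) * d i ^ 2 - μ * L * d i) := by
      rw [hS2def, hS1def, Finset.mul_sum, Finset.mul_sum, ← Finset.sum_sub_distrib]
      apply Finset.sum_congr rfl
      intro i _; ring
    rw [this, hS3def]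
    apply Finset.sum_le_sum
    intro i _
    have h1 : 0 ≤ (d i - μ) * (L - d i) :=
      mul_nonneg (by linarith [(hbd i).1]) (by linarith [(hbd i).2])
    have h2 : 0 ≤ ψ (d i) * e i ^ 2 := by
      have := (hψ i).le; positivity
    nlinarith [mul_nonneg (mul_nonneg h2 h1) (hdpos i).le]
  have kant : 4 * μ * L * S1 * S3 ≤ (L + μ) ^ 2 * S2 ^ 2 := by
    have h4 : 0 < 4 * μ * L := by positivity
    have step : 4 * μ * L * S1 * S3 ≤ 4 * μ * L * S1 * ((μ + L) * S2 - μ * L * S1) := by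
      apply mul_le_mul_of_nonneg_left hS3le
      positivity
    nlinarith [sq_nonneg ((L + μ) * S2 - 2 * μ * L * S1)]
  -- express the new error
  have hxe : xk1 - xs = e - αk • gk := by
    rw [hxk1, he]; funext i; simp; ring
  have hLHS : (xk1 - xs) ⬝ᵥ (ψA * A).mulVec (xk1 - xs)
      = S1 - 2 * αk * S2 + αk ^ 2 * S3 := by
    rw [hxe, hψAA, key, hS1def, hS2def, hS3def,
      Finset.mul_sum, Finset.mul_sum]
    rw [← Finset.sum_sub_distrib, ← Finset.sum_add_distrib]
    apply Finset.sum_congr rfl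
    intro i _
    simp [hgke i]
    ring
  rw [hLHS, hS1]
  have hαkval : αk = γ * S2 / S3 := by rw [hαk, hS2, hS3]
  have hLHS2 : S1 - 2 * αk * S2 + αk ^ 2 * S3 = S1 - γ * (2 - γ) * (S2 ^ 2 / S3) := by
    rw [hαkval]
    field_simp
    ring
  rw [hLHS2]
  have hc : 0 < γ * (2 - γ) := mul_pos hγ (by linarith)
  have h2 : 4 * γ * (2 - γ) * μ * L / (L + μ) ^ 2 * S1 ≤ γ * (2 - γ) * (S2 ^ 2 / S3) := by
    rw [div_mul_eq_mul_div, ← mul_div_assoc, div_le_div_iff₀ hLμ hS3pos]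
    calc 4 * γ * (2 - γ) * μ * L * S1 * S3
        = γ * (2 - γ) * (4 * μ * L * S1 * S3) := by ring
      _ ≤ γ * (2 - γ) * ((L + μ) ^ 2 * S2 ^ 2) := mul_le_mul_of_nonneg_left kant hc.le
      _ = γ * (2 - γ) * S2 ^ 2 * (L + μ) ^ 2 := by ring
  linarith
end

section
/- Under the setup of the family of gradient methods with stepsize α_k = γ (g_kᵀψ(A)g_k)/(g_kᵀψ(A)Ag_k), if g_k = (1/√2) ψ(A)^{-1/2}(ξ₁ ± ξₙ) where ξ₁, ξₙ are unit eigenvectors of A for eigenvalues μ and L respectively, then equality holds: ‖x_{k+1} - x*‖²_{ψ(A)A} = (1 - 4γ(2-γ)μL/(L+μ)²) ‖x_k - x*‖²_{ψ(A)A}. -/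
open Matrix

/-- If `g_k = (1/√2) ψ(A)^{-1/2}(ξ₁ ± ξₙ)`, equality holds in the linear
convergence rate of the family of gradient methods. -/
theorem stmt_2 {n : ℕ} (d : Fin (n + 2) → ℝ) (μ L γ : ℝ)
    (hd : StrictMono d) (h0 : d 0 = μ) (hlast : d (Fin.last (n + 1)) = L)
    (hμpos : 0 < μ)
    (ψ : ℝ → ℝ) (hψ : ∀ i, 0 < ψ (d i))
    (hγ : 0 < γ) (hγ1 : γ ≤ 1)
    (s : ℝ) (hs : s = 1 ∨ s = -1)
    (b xk xs : Fin (n + 2) → ℝ)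
    (A : Matrix (Fin (n + 2)) (Fin (n + 2)) ℝ) (hA : A = Matrix.diagonal d)
    (hxs : A.mulVec xs = b)
    (gk : Fin (n + 2) → ℝ)
    (hgkval : gk = fun i => (1 / Real.sqrt 2) * (Real.sqrt (ψ (d i)))⁻¹ *
      ((Pi.single (0 : Fin (n + 2)) (1 : ℝ) : Fin (n + 2) → ℝ) i +
        s * (Pi.single (Fin.last (n + 1)) (1 : ℝ) : Fin (n + 2) → ℝ) i))
    (hgk : gk = A.mulVec xk - b)
    (ψA : Matrix (Fin (n + 2)) (Fin (n + 2)) ℝ)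
    (hψA : ψA = Matrix.diagonal (fun i => ψ (d i)))
    (αk : ℝ) (hαk : αk = γ * (gk ⬝ᵥ ψA.mulVec gk) / (gk ⬝ᵥ (ψA * A).mulVec gk))
    (xk1 : Fin (n + 2) → ℝ) (hxk1 : xk1 = xk - αk • gk) :
    (xk1 - xs) ⬝ᵥ (ψA * A).mulVec (xk1 - xs) =
      (1 - 4 * γ * (2 - γ) * μ * L / (L + μ) ^ 2) *
        ((xk - xs) ⬝ᵥ (ψA * A).mulVec (xk - xs)) := by
  have h01 : (0 : Fin (n+2)) < Fin.last (n+1) := by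
    simp [Fin.lt_def]
  have hne : (0 : Fin (n+2)) ≠ Fin.last (n+1) := ne_of_lt h01
  have hμL : μ < L := by rw [← h0, ← hlast]; exact hd h01
  have hLpos : 0 < L := hμpos.trans hμL
  have hLμ : L + μ ≠ 0 := by positivity
  have hdpos : ∀ i, 0 < d i := fun i =>
    lt_of_lt_of_le (h0 ▸ hμpos) (hd.monotone (Fin.zero_le i))
  -- quadratic form over a diagonal matrix for vectors supported on {0, last}
  have quad : ∀ (w v : Fin (n+2) → ℝ), (∀ i, i ≠ 0 → i ≠ Fin.last (n+1) → v i = 0) →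
      v ⬝ᵥ (Matrix.diagonal w).mulVec v
        = w 0 * v 0 ^ 2 + w (Fin.last (n+1)) * v (Fin.last (n+1)) ^ 2 := by
    intro w v hv
    simp only [dotProduct, mulVec_diagonal]
    rw [← Finset.sum_subset (Finset.subset_univ ({0, Fin.last (n+1)} : Finset (Fin (n+2))))
        (by intro x _ hx
            simp only [Finset.mem_insert, Finset.mem_singleton, not_or] at hx
            rw [hv x hx.1 hx.2]; ring),
      Finset.sum_pair hne]
    ring
  -- components of gk
  have hg0 : gk 0 = 1 / Real.sqrt 2 * (Real.sqrt (ψ (d 0)))⁻¹ := by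
    rw [hgkval]
    simp [Pi.single_eq_of_ne hne]
  have hgl : gk (Fin.last (n+1)) =
      1 / Real.sqrt 2 * (Real.sqrt (ψ (d (Fin.last (n+1)))))⁻¹ * s := by
    rw [hgkval]
    simp [Pi.single_eq_of_ne hne.symm]
  have hgzero : ∀ i, i ≠ 0 → i ≠ Fin.last (n+1) → gk i = 0 := by
    intro i hi0 hil
    rw [hgkval]
    simp [Pi.single_eq_of_ne hi0, Pi.single_eq_of_ne hil]
  have hs2 : s ^ 2 = 1 := by rcases hs with h | h <;> rw [h] <;> norm_num
  have key0 : ψ (d 0) * gk 0 ^ 2 = 1 / 2 := by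
    rw [hg0, mul_pow, div_pow, one_pow, inv_pow,
      Real.sq_sqrt (by norm_num : (0:ℝ) ≤ 2), Real.sq_sqrt (hψ 0).le]
    field_simp [(hψ 0).ne', (hψ (Fin.last (n+1))).ne']
  have keyL : ψ (d (Fin.last (n+1))) * gk (Fin.last (n+1)) ^ 2 = 1 / 2 := by
    rw [hgl, mul_pow, mul_pow, div_pow, one_pow, inv_pow,
      Real.sq_sqrt (by norm_num : (0:ℝ) ≤ 2), Real.sq_sqrt (hψ (Fin.last (n+1))).le, hs2]
    field_simp [(hψ 0).ne', (hψ (Fin.last (n+1))).ne']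
  -- components of xk - xs
  have hmv : A.mulVec (xk - xs) = gk := by
    rw [Matrix.mulVec_sub, hxs, hgk]
  have hy : ∀ i, (xk - xs) i = gk i / d i := by
    intro i
    have h := congrFun hmv i
    rw [hA, mulVec_diagonal] at h
    rw [eq_div_iff (hdpos i).ne']
    rw [mul_comm] at h
    exact h
  have hyzero : ∀ i, i ≠ 0 → i ≠ Fin.last (n+1) → (xk - xs) i = 0 := by
    intro i hi0 hil
    rw [hy i, hgzero i hi0 hil, zero_div]
  -- components of xk1 - xs
  have hz : ∀ i, (xk1 - xs) i = gk i / d i - αk * gk i := by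
    intro i
    rw [hxk1]
    simp only [Pi.sub_apply, Pi.smul_apply, smul_eq_mul]
    rw [← hy i]
    simp only [Pi.sub_apply]
    ring
  have hzzero : ∀ i, i ≠ 0 → i ≠ Fin.last (n+1) → (xk1 - xs) i = 0 := by
    intro i hi0 hil
    rw [hz i, hgzero i hi0 hil]
    simp
  -- value of αk
  have hS1 : gk ⬝ᵥ ψA.mulVec gk = 1 := by
    rw [hψA, quad _ _ hgzero]
    rw [key0, keyL]; norm_num
  have hS2 : gk ⬝ᵥ (ψA * A).mulVec gk = (μ + L) / 2 := by
    rw [hψA, hA, diagonal_mul_diagonal, quad _ _ hgzero]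
    have e0 : ψ (d 0) * d 0 * gk 0 ^ 2 = d 0 * (ψ (d 0) * gk 0 ^ 2) := by ring
    have el : ψ (d (Fin.last (n+1))) * d (Fin.last (n+1)) * gk (Fin.last (n+1)) ^ 2
        = d (Fin.last (n+1)) * (ψ (d (Fin.last (n+1))) * gk (Fin.last (n+1)) ^ 2) := by ring
    show ψ (d 0) * d 0 * gk 0 ^ 2
        + ψ (d (Fin.last (n+1))) * d (Fin.last (n+1)) * gk (Fin.last (n+1)) ^ 2 = (μ + L) / 2
    rw [e0, el, key0, keyL, h0, hlast]
    ring
  have hα : αk = 2 * γ / (L + μ) := by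
    rw [hαk, hS1, hS2]
    rw [mul_one]
    rw [div_div_eq_mul_div, div_eq_div_iff (by positivity) hLμ]
    ring
  -- main computation
  rw [hψA, hA, diagonal_mul_diagonal, quad _ _ hzzero, quad _ _ hyzero,
    hz 0, hz (Fin.last (n+1)), hy 0, hy (Fin.last (n+1)), hα]
  show ψ (d 0) * d 0 * (gk 0 / d 0 - 2 * γ / (L + μ) * gk 0) ^ 2
      + ψ (d (Fin.last (n+1))) * d (Fin.last (n+1)) *
        (gk (Fin.last (n+1)) / d (Fin.last (n+1))
          - 2 * γ / (L + μ) * gk (Fin.last (n+1))) ^ 2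
      = (1 - 4 * γ * (2 - γ) * μ * L / (L + μ) ^ 2) *
        (ψ (d 0) * d 0 * (gk 0 / d 0) ^ 2
          + ψ (d (Fin.last (n+1))) * d (Fin.last (n+1)) *
            (gk (Fin.last (n+1)) / d (Fin.last (n+1))) ^ 2)
  rw [h0] at key0 ⊢
  rw [hlast] at keyL ⊢
  set a := gk 0
  set c := gk (Fin.last (n+1))
  set p := ψ μ
  set q := ψ L
  have hμ' : μ ≠ 0 := hμpos.ne'
  have hL' : L ≠ 0 := hLpos.ne'
  have e1 : p*μ*(a/μ - 2*γ/(L+μ)*a)^2 = (p*a^2)*(μ*(1/μ - 2*γ/(L+μ))^2) := by ring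
  have e2 : q*L*(c/L - 2*γ/(L+μ)*c)^2 = (q*c^2)*(L*(1/L - 2*γ/(L+μ))^2) := by ring
  have e3 : p*μ*(a/μ)^2 = (p*a^2)*(1/μ) := by field_simp
  have e4 : q*L*(c/L)^2 = (q*c^2)*(1/L) := by field_simp
  rw [e1, e2, e3, e4, key0, keyL]
  field_simp
  ring
end

section
/- For the quadratic f(x) = ½xᵀAx - bᵀx with A = diag(λ₁,...,λₙ), 0 < μ = λ₁ ≤ ... ≤ λₙ = L, minimizer x*, the gradient step x_{k+1} = x_k - α_k g_k with the Polyak stepsize α_k = γ (g_kᵀA⁻¹g_k)/(g_kᵀg_k), γ ∈ (0,1], satisfies ‖x_{k+1} - x*‖² ≤ (1 - 4γ(2-γ)μL/(L+μ)²)‖x_k - x*‖². -/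
open Matrix

/-- Linear convergence in iterates of the gradient method with the Polyak
stepsize `α_k = γ (g_kᵀA⁻¹g_k)/(g_kᵀg_k)` on a quadratic with diagonal Hessian
with eigenvalues in `[μ, L]`. -/
theorem stmt_5 {n : ℕ} (d : Fin n → ℝ) (μ L γ : ℝ)
    (hμpos : 0 < μ) (hbd : ∀ i, μ ≤ d i ∧ d i ≤ L)
    (hμatt : ∃ i, d i = μ) (hLatt : ∃ i, d i = L)
    (hγ : 0 < γ) (hγ1 : γ ≤ 1)
    (b xk xs : Fin n → ℝ)
    (A : Matrix (Fin n) (Fin n) ℝ) (hA : A = Matrix.diagonal d)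
    (hxs : A.mulVec xs = b)
    (gk : Fin n → ℝ) (hgk : gk = A.mulVec xk - b) (hgk0 : gk ≠ 0)
    (αk : ℝ) (hαk : αk = γ * (gk ⬝ᵥ A⁻¹.mulVec gk) / (gk ⬝ᵥ gk))
    (xk1 : Fin n → ℝ) (hxk1 : xk1 = xk - αk • gk) :
    (xk1 - xs) ⬝ᵥ (xk1 - xs) ≤
      (1 - 4 * γ * (2 - γ) * μ * L / (L + μ) ^ 2) * ((xk - xs) ⬝ᵥ (xk - xs)) := by
  obtain ⟨iL, hiL⟩ := hLatt
  have hdpos : ∀ i, 0 < d i := fun i => lt_of_lt_of_le hμpos (hbd i).1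
  have hμL : μ ≤ L := hiL ▸ (hbd iL).1
  have hLpos : 0 < L := lt_of_lt_of_le hμpos hμL
  set e : Fin n → ℝ := fun i => xk i - xs i with he
  have hgke : ∀ i, gk i = d i * e i := by
    intro i
    simp only [hgk, ← hxs, hA, Pi.sub_apply, Matrix.mulVec_diagonal, he]
    ring
  have hAinv : A⁻¹ = Matrix.diagonal (fun i => (d i)⁻¹) := by
    rw [hA]
    apply Matrix.inv_eq_right_inv
    rw [Matrix.diagonal_mul_diagonal]
    rw [show (fun i => d i * (d i)⁻¹) = fun _ : Fin n => (1:ℝ) from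
      funext fun i => mul_inv_cancel₀ (hdpos i).ne', Matrix.diagonal_one]
  set S := ∑ i, e i ^ 2 with hS
  set P := ∑ i, d i * e i ^ 2 with hP
  set Q := ∑ i, d i ^ 2 * e i ^ 2 with hQ
  have hP1 : gk ⬝ᵥ A⁻¹.mulVec gk = P := by
    rw [hP]
    apply Finset.sum_congr rfl
    intro i _
    rw [hAinv, Matrix.mulVec_diagonal, hgke]
    field_simp [(hdpos i).ne']
  have hQ1 : gk ⬝ᵥ gk = Q := by
    rw [hQ]
    apply Finset.sum_congr rfl
    intro i _
    rw [hgke]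
    ring
  have hQpos : 0 < Q := by
    have hj : ∃ j, gk j ≠ 0 := by
      by_contra h
      push_neg at h
      exact hgk0 (funext h)
    obtain ⟨j, hj⟩ := hj
    have hej : e j ≠ 0 := by
      intro h
      exact hj (by rw [hgke, h, mul_zero])
    rw [hQ]
    apply Finset.sum_pos' (fun i _ => by positivity)
    exact ⟨j, Finset.mem_univ j,
      mul_pos (pow_pos (hdpos j) 2) ((sq_nonneg _).lt_of_ne (Ne.symm (pow_ne_zero 2 hej)))⟩
  have hSnn : 0 ≤ S := Finset.sum_nonneg fun i _ => sq_nonneg _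
  have hPnn : 0 ≤ P := Finset.sum_nonneg fun i _ =>
    mul_nonneg (hdpos i).le (sq_nonneg _)
  have hα : αk = γ * P / Q := by rw [hαk, hP1, hQ1]
  have hS1 : (xk - xs) ⬝ᵥ (xk - xs) = S := by
    apply Finset.sum_congr rfl
    intro i _
    simp only [Pi.sub_apply, he]
    ring
  have hLHS : (xk1 - xs) ⬝ᵥ (xk1 - xs) = S - 2 * αk * P + αk ^ 2 * Q := by
    have h1 : (xk1 - xs) ⬝ᵥ (xk1 - xs)
        = ∑ i, (e i ^ 2 - 2 * αk * (d i * e i ^ 2) + αk ^ 2 * (d i ^ 2 * e i ^ 2)) := by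
      apply Finset.sum_congr rfl
      intro i _
      simp only [hxk1, Pi.sub_apply, Pi.smul_apply, smul_eq_mul, hgke, he]
      ring
    rw [h1]
    simp only [Finset.sum_add_distrib, Finset.sum_sub_distrib, ← Finset.mul_sum]
    rfl
  -- Kantorovich-type inequality
  have hK : μ * L * S ≤ (μ + L) * P - Q := by
    have hterm : ∀ i ∈ Finset.univ, μ * L * e i ^ 2 ≤
        (μ + L) * (d i * e i ^ 2) - d i ^ 2 * e i ^ 2 := by
      intro i _
      nlinarith [mul_nonneg (mul_nonneg (sub_nonneg.mpr (hbd i).1)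
        (sub_nonneg.mpr (hbd i).2)) (sq_nonneg (e i))]
    have := Finset.sum_le_sum hterm
    simpa [Finset.mul_sum, Finset.sum_sub_distrib, hS, hP, hQ] using this
  have hkey : 4 * μ * L * S * Q ≤ (L + μ) ^ 2 * P ^ 2 := by
    nlinarith [hK, hQpos, sq_nonneg (2 * Q - (μ + L) * P), mul_pos hμpos hLpos,
      mul_le_mul_of_nonneg_right hK hQpos.le]
  clear_value S P Q
  rw [hLHS, hS1, hα]
  have hexp : S - 2 * (γ * P / Q) * P + (γ * P / Q) ^ 2 * Q
      = S - (γ * (2 - γ)) * (P ^ 2 / Q) := by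
    field_simp
    ring
  rw [hexp]
  have hLμpos : 0 < (L + μ) ^ 2 := by positivity
  have hfinal : 4 * γ * (2 - γ) * μ * L / (L + μ) ^ 2 * S ≤ γ * (2 - γ) * (P ^ 2 / Q) := by
    rw [show 4 * γ * (2 - γ) * μ * L / (L + μ) ^ 2 * S
        = 4 * γ * (2 - γ) * μ * L * S / (L + μ) ^ 2 from by ring,
      show γ * (2 - γ) * (P ^ 2 / Q) = γ * (2 - γ) * P ^ 2 / Q from by ring,
      div_le_div_iff₀ hLμpos hQpos]
    have hγ2 : 0 ≤ γ * (2 - γ) := by nlinarith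
    have h := mul_le_mul_of_nonneg_left hkey hγ2
    have h2 : 4 * γ * (2 - γ) * μ * L * S * Q = γ * (2 - γ) * (4 * μ * L * S * Q) := by ring
    have h3 : γ * (2 - γ) * P ^ 2 * (L + μ) ^ 2 = γ * (2 - γ) * ((L + μ) ^ 2 * P ^ 2) := by ring
    rw [h2, h3]
    exact h
  have hrhs : (1 - 4 * γ * (2 - γ) * μ * L / (L + μ) ^ 2) * S
      = S - 4 * γ * (2 - γ) * μ * L / (L + μ) ^ 2 * S := by ring
  rw [hrhs]
  linarith [hfinal]
end

section
/- Let f: ℝⁿ → ℝ be L-smooth and μ-strongly convex with 0 < μ < L. Then for all x, y ∈ ℝⁿ: f(x) - f(y) + ∇f(x)ᵀ(y-x) + (1/(2(1-μ/L)))·(μ‖x-y‖² - (2μ/L)(∇f(x)-∇f(y))ᵀ(x-y) + (1/L)‖∇f(x)-∇f(y)‖²) ≤ 0. -/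
set_option maxHeartbeats 1000000


open RealInnerProductSpace

/-- Interpolation inequality for `L`-smooth, `μ`-strongly convex functions
(Theorem 4 of Taylor–Hendrickx–Glineur), with `g = ∇f`. -/
theorem stmt_7 {n : ℕ} (μ L : ℝ) (hμ : 0 < μ) (hμL : μ < L)
    (f : EuclideanSpace ℝ (Fin n) → ℝ)
    (g : EuclideanSpace ℝ (Fin n) → EuclideanSpace ℝ (Fin n))
    (hgrad : ∀ x, HasGradientAt f (g x) x)
    (hsmooth : ∀ x y, f y ≤ f x + ⟪g x, y - x⟫ + L / 2 * ‖x - y‖ ^ 2)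
    (hconv : ∀ x y, f y ≥ f x + ⟪g x, y - x⟫ + μ / 2 * ‖x - y‖ ^ 2) :
    ∀ x y, f x - f y + ⟪g x, y - x⟫ + 1 / (2 * (1 - μ / L)) *
      (μ * ‖x - y‖ ^ 2 - 2 * μ / L * ⟪g x - g y, x - y⟫ +
        1 / L * ‖g x - g y‖ ^ 2) ≤ 0 := by
  intro x y
  have hL : (0:ℝ) < L := hμ.trans hμL
  have hK : (0:ℝ) < L - μ := by linarith
  set c : ℝ := (L - μ)⁻¹ with hcdef
  have hc : c * (L - μ) = 1 := inv_mul_cancel₀ (ne_of_gt hK)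
  set d : EuclideanSpace ℝ (Fin n) := (g x - g y) - μ • (x - y) with hd
  set z : EuclideanSpace ℝ (Fin n) := y + c • d with hz
  have h1 := hconv x z
  have h2 := hsmooth y z
  -- expansions
  have ezx : z - x = (y - x) + c • d := by rw [hz]; module
  have exz : x - z = (x - y) - c • d := by rw [hz]; module
  have eyz : y - z = -(c • d) := by rw [hz]; module
  have e1 : ⟪g x, z - x⟫ = ⟪g x, y - x⟫ + c * ⟪g x, d⟫ := by
    rw [ezx, inner_add_right, real_inner_smul_right]
  have e2 : ‖x - z‖ ^ 2 = ‖x - y‖ ^ 2 - 2 * c * ⟪x - y, d⟫ + c ^ 2 * ‖d‖ ^ 2 := by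
    rw [exz, norm_sub_sq_real, real_inner_smul_right, norm_smul, Real.norm_eq_abs, mul_pow, sq_abs]
    ring
  have e3 : ⟪g y, z - y⟫ = c * ⟪g y, d⟫ := by
    have : z - y = c • d := by rw [hz]; module
    rw [this, real_inner_smul_right]
  have e4 : ‖y - z‖ ^ 2 = c ^ 2 * ‖d‖ ^ 2 := by
    rw [eyz, norm_neg, norm_smul, Real.norm_eq_abs, mul_pow, sq_abs]
  have e5 : ⟪g x, d⟫ - ⟪g y, d⟫ = ‖d‖ ^ 2 + μ * ⟪x - y, d⟫ := by
    have hgxy : g x - g y = d + μ • (x - y) := by rw [hd]; module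
    have : ⟪g x - g y, d⟫ = ‖d‖ ^ 2 + μ * ⟪x - y, d⟫ := by
      rw [hgxy, inner_add_left, real_inner_smul_left, real_inner_self_eq_norm_sq]
    rw [← this, inner_sub_left]
  have e6 : ‖d‖ ^ 2 = ‖g x - g y‖ ^ 2 - 2 * μ * ⟪g x - g y, x - y⟫ + μ ^ 2 * ‖x - y‖ ^ 2 := by
    rw [hd, norm_sub_sq_real, real_inner_smul_right, norm_smul, Real.norm_eq_abs, mul_pow, sq_abs]
    ring
  rw [e1, e2] at h1
  rw [e3, e4] at h2
  have e5' : c * ⟪g x, d⟫ - c * ⟪g y, d⟫ = c * ‖d‖ ^ 2 + c * μ * ⟪x - y, d⟫ := by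
    linear_combination c * e5
  have hc2 : (L / 2 - μ / 2) * (c ^ 2 * ‖d‖ ^ 2) = c / 2 * ‖d‖ ^ 2 := by
    have : c ^ 2 * (L - μ) = c := by
      rw [sq]; rw [mul_assoc, hc, mul_one]
    linear_combination (‖d‖ ^ 2 / 2) * this
  have key : f x + ⟪g x, y - x⟫ + μ / 2 * ‖x - y‖ ^ 2 + c / 2 * ‖d‖ ^ 2 ≤ f y := by
    nlinarith [h1, h2, e5', hc2]
  have e8 : 1 / (2 * (1 - μ / L)) *
      (μ * ‖x - y‖ ^ 2 - 2 * μ / L * ⟪g x - g y, x - y⟫ + 1 / L * ‖g x - g y‖ ^ 2)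
      = μ / 2 * ‖x - y‖ ^ 2 + c / 2 * ‖d‖ ^ 2 := by
    rw [e6, hcdef]
    field_simp
    ring
  linarith [key, e8.le, e8.ge]
end

section
/- Let f be L-smooth and μ-strongly convex on ℝⁿ with 0 < μ < L, with minimizer x* and minimum value f*. Let x_{k+1} = x_k - α_k g_k where g_k = ∇f(x_k) and α_k is obtained by exact line search, i.e., α_k minimizes α ↦ f(x_k - α g_k) over α > 0 (so g_{k+1}ᵀg_k = 0). Then f(x_{k+1}) - f* ≤ ((L-μ)/(L+μ))² (f(x_k) - f*). -/
open RealInnerProductSpace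

set_option maxHeartbeats 1000000 in
/-- Worst-case rate of the gradient method with exact line search on
`L`-smooth, `μ`-strongly convex functions:
`f(x_{k+1}) - f* ≤ ((L-μ)/(L+μ))² (f(x_k) - f*)`. -/
theorem stmt_8 {n : ℕ} (μ L : ℝ) (hμ : 0 < μ) (hμL : μ < L)
    (f : EuclideanSpace ℝ (Fin n) → ℝ)
    (g : EuclideanSpace ℝ (Fin n) → EuclideanSpace ℝ (Fin n))
    (hgrad : ∀ x, HasGradientAt f (g x) x)
    (hsmooth : ∀ x y, f y ≤ f x + ⟪g x, y - x⟫ + L / 2 * ‖x - y‖ ^ 2)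
    (hconv : ∀ x y, f y ≥ f x + ⟪g x, y - x⟫ + μ / 2 * ‖x - y‖ ^ 2)
    (xs : EuclideanSpace ℝ (Fin n)) (hmin : ∀ y, f xs ≤ f y)
    (xk : EuclideanSpace ℝ (Fin n)) (α : ℝ) (hα : 0 < α)
    (hls : ∀ β : ℝ, 0 < β → f (xk - α • g xk) ≤ f (xk - β • g xk))
    (xk1 : EuclideanSpace ℝ (Fin n)) (hxk1 : xk1 = xk - α • g xk)
    (horth : ⟪g xk1, g xk⟫ = 0) :
    f xk1 - f xs ≤ ((L - μ) / (L + μ)) ^ 2 * (f xk - f xs) := by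
  have hc : (0:ℝ) < L - μ := by linarith
  have hL : (0:ℝ) < L := hμ.trans hμL
  have hLμ : (0:ℝ) < L + μ := by linarith
  -- Step 1: gradient vanishes at the minimizer
  have hgs : g xs = 0 := by
    have h1 := hsmooth xs (xs - L⁻¹ • g xs)
    have h2 := hmin (xs - L⁻¹ • g xs)
    have e1 : xs - L⁻¹ • g xs - xs = -(L⁻¹ • g xs) := by module
    have e2 : xs - (xs - L⁻¹ • g xs) = L⁻¹ • g xs := by module
    rw [e1, e2, inner_neg_right, real_inner_smul_right, real_inner_self_eq_norm_sq,
      norm_smul, Real.norm_eq_abs, mul_pow, sq_abs] at h1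
    have hinv : L * L⁻¹ = 1 := mul_inv_cancel₀ hL.ne'
    have hq : L * (L⁻¹ ^ 2 * ‖g xs‖ ^ 2) = L⁻¹ * ‖g xs‖ ^ 2 := by
      have : (L * L⁻¹) * (L⁻¹ * ‖g xs‖ ^ 2) = 1 * (L⁻¹ * ‖g xs‖ ^ 2) := by rw [hinv]
      ring_nf at this ⊢; linarith
    have h3 : L⁻¹ * ‖g xs‖ ^ 2 ≤ L⁻¹ * 0 := by rw [mul_zero]; linarith
    have h4 : ‖g xs‖ ^ 2 ≤ 0 := le_of_mul_le_mul_left h3 (inv_pos.2 hL)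
    have h5 : ‖g xs‖ = 0 := by nlinarith [norm_nonneg (g xs)]
    exact norm_eq_zero.mp h5
  -- Step 2: interpolation inequality
  have key : ∀ x y : EuclideanSpace ℝ (Fin n),
      ‖(g x - g y) - μ • (x - y)‖ ^ 2
        ≤ 2 * (L - μ) * (f x - f y - ⟪g y, x - y⟫ - μ / 2 * ‖x - y‖ ^ 2) := by
    intro x y
    obtain ⟨w, hw⟩ : ∃ w, w = (g x - g y) - μ • (x - y) := ⟨_, rfl⟩
    rw [← hw]
    set t : ℝ := (L - μ)⁻¹ with htdef
    have ht : (L - μ) * t = 1 := mul_inv_cancel₀ hc.ne'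
    have h1 := hsmooth x (x - t • w)
    have h2 := hconv y (x - t • w)
    have e1 : x - t • w - x = -(t • w) := by module
    have e2 : x - (x - t • w) = t • w := by module
    have e3 : x - t • w - y = (x - y) - t • w := by module
    have e4 : y - (x - t • w) = -((x - y) - t • w) := by module
    rw [e1, e2] at h1
    rw [e3, e4] at h2
    rw [inner_neg_right, real_inner_smul_right] at h1
    rw [norm_smul, Real.norm_eq_abs, mul_pow, sq_abs] at h1
    rw [inner_sub_right, real_inner_smul_right] at h2
    rw [norm_neg, norm_sub_sq_real, real_inner_smul_right] at h2
    rw [norm_smul, Real.norm_eq_abs, mul_pow, sq_abs] at h2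
    have hbr : ⟪g x, w⟫ - ⟪g y, w⟫ - μ * ⟪x - y, w⟫ = ‖w‖ ^ 2 := by
      have h := real_inner_self_eq_norm_sq w
      nth_rewrite 1 [hw] at h
      simp only [inner_sub_left, real_inner_smul_left] at h ⊢
      linarith
    have hbr_t : t * ⟪g x, w⟫ - t * ⟪g y, w⟫ - μ * (t * ⟪x - y, w⟫) = t * ‖w‖ ^ 2 := by
      have := congrArg (t * ·) hbr
      ring_nf at this ⊢
      linarith
    have hq1 : L * (t * t * ‖w‖ ^ 2) - μ * (t * t * ‖w‖ ^ 2) = t * ‖w‖ ^ 2 := by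
      have : (L - μ) * t * (t * ‖w‖ ^ 2) = 1 * (t * ‖w‖ ^ 2) := by rw [ht]
      ring_nf at this ⊢
      linarith
    have key' : f y + ⟪g y, x - y⟫ + μ / 2 * ‖x - y‖ ^ 2 + t / 2 * ‖w‖ ^ 2 ≤ f x := by
      linarith [h1, h2, hbr_t, hq1]
    have hq2 : 2 * (L - μ) * (t / 2 * ‖w‖ ^ 2) = ‖w‖ ^ 2 := by
      have : (L - μ) * t * ‖w‖ ^ 2 = 1 * ‖w‖ ^ 2 := by rw [ht]
      ring_nf at this ⊢
      linarith
    have h10 := mul_le_mul_of_nonneg_left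
      (show t / 2 * ‖w‖ ^ 2 ≤ f x - f y - ⟪g y, x - y⟫ - μ / 2 * ‖x - y‖ ^ 2 by linarith)
      (by linarith : (0:ℝ) ≤ 2 * (L - μ))
    linarith [h10, hq2]
  -- abbreviations for scalar atoms
  have horth' : ⟪g xk, g xk1⟫ = 0 := by rw [real_inner_comm]; exact horth
  -- Step 3a: inequality A between xk and xk1
  have eA1 : xk - xk1 = α • g xk := by rw [hxk1]; module
  have hA0 := key xk xk1
  rw [eA1] at hA0
  have cA1 : ⟪g xk1, α • g xk⟫ = 0 := by rw [real_inner_smul_right, horth]; ring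
  have cA2 : ‖α • g xk‖ ^ 2 = α ^ 2 * ‖g xk‖ ^ 2 := by
    rw [norm_smul, Real.norm_eq_abs, mul_pow, sq_abs]
  have cA3 : ‖(g xk - g xk1) - μ • (α • g xk)‖ ^ 2
      = (1 - μ * α) ^ 2 * ‖g xk‖ ^ 2 + ‖g xk1‖ ^ 2 := by
    have e : (g xk - g xk1) - μ • (α • g xk) = (1 - μ * α) • g xk - g xk1 := by module
    rw [e, norm_sub_sq_real, real_inner_smul_left, horth', norm_smul, Real.norm_eq_abs,
      mul_pow, sq_abs]
    ring
  rw [cA1, cA2, cA3] at hA0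
  -- Step 3b: inequality B between xs and xk
  have eB1 : xs - xk = -(xk - xs) := by module
  have hB0 := key xs xk
  rw [eB1, hgs] at hB0
  have cB1 : ⟪g xk, -(xk - xs)⟫ = -⟪g xk, xk - xs⟫ := inner_neg_right _ _
  have cB2 : ‖-(xk - xs)‖ ^ 2 = ‖xk - xs‖ ^ 2 := by rw [norm_neg]
  have cB3 : ‖(0 - g xk) - μ • -(xk - xs)‖ ^ 2
      = μ ^ 2 * ‖xk - xs‖ ^ 2 - 2 * μ * ⟪g xk, xk - xs⟫ + ‖g xk‖ ^ 2 := by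
    have e : (0 - g xk) - μ • -(xk - xs) = μ • (xk - xs) - g xk := by module
    rw [e, norm_sub_sq_real, real_inner_smul_left, real_inner_comm (xk - xs) (g xk),
      norm_smul, Real.norm_eq_abs, mul_pow, sq_abs]
    ring
  rw [cB1, cB2, cB3] at hB0
  -- Step 3c: inequality C between xs and xk1
  have eC1 : xs - xk1 = α • g xk - (xk - xs) := by rw [hxk1]; module
  have hC0 := key xs xk1
  rw [eC1, hgs] at hC0
  have cC1 : ⟪g xk1, α • g xk - (xk - xs)⟫ = -⟪g xk1, xk - xs⟫ := by
    rw [inner_sub_right, real_inner_smul_right, horth]; ring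
  have cC2 : ‖α • g xk - (xk - xs)‖ ^ 2
      = α ^ 2 * ‖g xk‖ ^ 2 - 2 * α * ⟪g xk, xk - xs⟫ + ‖xk - xs‖ ^ 2 := by
    rw [norm_sub_sq_real, real_inner_smul_left, norm_smul, Real.norm_eq_abs, mul_pow, sq_abs]
    ring
  have cC3 : ‖(0 - g xk1) - μ • (α • g xk - (xk - xs))‖ ^ 2
      = μ ^ 2 * ‖xk - xs‖ ^ 2 + μ ^ 2 * α ^ 2 * ‖g xk‖ ^ 2 + ‖g xk1‖ ^ 2
        - 2 * μ ^ 2 * α * ⟪g xk, xk - xs⟫ - 2 * μ * ⟪g xk1, xk - xs⟫ := by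
    have e : (0 - g xk1) - μ • (α • g xk - (xk - xs))
        = (μ • (xk - xs) - (μ * α) • g xk) - g xk1 := by module
    rw [e, norm_sub_sq_real, norm_sub_sq_real]
    simp only [inner_sub_left, inner_sub_right, real_inner_smul_left, real_inner_smul_right,
      norm_smul, Real.norm_eq_abs, mul_pow, sq_abs, real_inner_comm (xk - xs) (g xk),
      real_inner_comm (xk - xs) (g xk1), horth', horth]
    ring
  rw [cC1, cC2, cC3] at hC0
  -- Step 4: SOS certificate terms
  have hV0 : (0:ℝ) ≤ ‖(2 * μ * L) • (xk - xs) - ((L - μ) + μ * α * (L + μ)) • g xk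
      - (L + μ) • g xk1‖ ^ 2 := sq_nonneg _
  have cV : ‖(2 * μ * L) • (xk - xs) - ((L - μ) + μ * α * (L + μ)) • g xk
      - (L + μ) • g xk1‖ ^ 2
      = 4 * μ ^ 2 * L ^ 2 * ‖xk - xs‖ ^ 2
        + ((L - μ) + μ * α * (L + μ)) ^ 2 * ‖g xk‖ ^ 2
        + (L + μ) ^ 2 * ‖g xk1‖ ^ 2
        - 4 * μ * L * ((L - μ) + μ * α * (L + μ)) * ⟪g xk, xk - xs⟫
        - 4 * μ * L * (L + μ) * ⟪g xk1, xk - xs⟫ := by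
    have e : (2 * μ * L) • (xk - xs) - ((L - μ) + μ * α * (L + μ)) • g xk - (L + μ) • g xk1
        = ((2 * μ * L) • (xk - xs) - ((L - μ) + μ * α * (L + μ)) • g xk) - (L + μ) • g xk1 := by
      module
    rw [e, norm_sub_sq_real, norm_sub_sq_real]
    simp only [inner_sub_left, inner_sub_right, real_inner_smul_left, real_inner_smul_right,
      norm_smul, Real.norm_eq_abs, mul_pow, sq_abs, real_inner_comm (xk - xs) (g xk),
      real_inner_comm (xk - xs) (g xk1), horth', horth]
    ring
  rw [cV] at hV0
  have t1 : (0:ℝ) ≤ ((L - μ) * (L + μ) / 2) *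
      (2 * (L - μ) * (f xk - f xk1 - 0 - μ / 2 * (α ^ 2 * ‖g xk‖ ^ 2))
        - ((1 - μ * α) ^ 2 * ‖g xk‖ ^ 2 + ‖g xk1‖ ^ 2)) :=
    mul_nonneg (by positivity) (by linarith)
  have t2 : (0:ℝ) ≤ (μ * (L - μ)) *
      (2 * (L - μ) * (f xs - f xk - (-⟪g xk, xk - xs⟫) - μ / 2 * ‖xk - xs‖ ^ 2)
        - (μ ^ 2 * ‖xk - xs‖ ^ 2 - 2 * μ * ⟪g xk, xk - xs⟫ + ‖g xk‖ ^ 2)) :=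
    mul_nonneg (by positivity) (by linarith)
  have t3 : (0:ℝ) ≤ (μ * (L + μ)) *
      (2 * (L - μ) * (f xs - f xk1 - (-⟪g xk1, xk - xs⟫)
          - μ / 2 * (α ^ 2 * ‖g xk‖ ^ 2 - 2 * α * ⟪g xk, xk - xs⟫ + ‖xk - xs‖ ^ 2))
        - (μ ^ 2 * ‖xk - xs‖ ^ 2 + μ ^ 2 * α ^ 2 * ‖g xk‖ ^ 2 + ‖g xk1‖ ^ 2
          - 2 * μ ^ 2 * α * ⟪g xk, xk - xs⟫ - 2 * μ * ⟪g xk1, xk - xs⟫)) :=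
    mul_nonneg (by positivity) (by linarith)
  have t5 : (0:ℝ) ≤ μ * (L - μ) * ((α * (L + μ) - 2) ^ 2 * ‖g xk‖ ^ 2) :=
    mul_nonneg (mul_nonneg hμ.le hc.le) (mul_nonneg (sq_nonneg _) (sq_nonneg _))
  have hscaled : (L - μ) * ((L + μ) ^ 2 * (f xk1 - f xs))
      ≤ (L - μ) * ((L - μ) ^ 2 * (f xk - f xs)) := by
    linarith only [t1, t2, t3, hV0, t5]
  have h6 : (L + μ) ^ 2 * (f xk1 - f xs) ≤ (L - μ) ^ 2 * (f xk - f xs) :=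
    le_of_mul_le_mul_left hscaled hc
  rw [div_pow, div_mul_eq_mul_div, le_div_iff₀ (by positivity)]
  linarith [h6]
end
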